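/- Define sid(b₁,b_i;x) = log((cosh(x/2) + cosh((b₁+b_i)/2))/(cosh(x/2) + cosh((b₁-b_i)/2))), mid(b₁;b_i,x) = 2·log((exp(b₁/2)+exp((b_i+x)/2))/(exp(-b₁/2)+exp((b_i+x)/2))), and H(s,t) = 1/(1+exp((s+t)/2)) + 1/(1+exp((s-t)/2)). Then for all real b₁, b_i, x, the partial derivative of sid(b₁,b_i;x) + mid(b₁;b_i,x) with respect to b₁ equals (1/2)·(H(x, b₁+b_i) + H(x, b₁-b_i)). -/

import Mathlib

open Real

/-- H(s,t) = 1/(1+exp((s+t)/2)) + 1/(1+exp((s-t)/2)). -/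
noncomputable def H (s t : ℝ) : ℝ :=
  1 / (1 + Real.exp ((s + t) / 2)) + 1 / (1 + Real.exp ((s - t) / 2))

/-- sid(b₁,bᵢ;x) = log((cosh(x/2)+cosh((b₁+bᵢ)/2))/(cosh(x/2)+cosh((b₁-bᵢ)/2))). -/
noncomputable def sid (b₁ bᵢ x : ℝ) : ℝ :=
  Real.log ((Real.cosh (x / 2) + Real.cosh ((b₁ + bᵢ) / 2)) /
      (Real.cosh (x / 2) + Real.cosh ((b₁ - bᵢ) / 2)))

/-- mid(b₁; bᵢ, x) = 2 log((e^{b₁/2} + e^{(bᵢ+x)/2})/(e^{-b₁/2} + e^{(bᵢ+x)/2})). -/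
noncomputable def mid (b₁ bᵢ x : ℝ) : ℝ :=
  2 * Real.log ((Real.exp (b₁ / 2) + Real.exp ((bᵢ + x) / 2)) /
      (Real.exp (-b₁ / 2) + Real.exp ((bᵢ + x) / 2)))

/-- ∂(sid(b₁,bᵢ;x) + mid(b₁;bᵢ,x))/∂b₁ = ½(H(x, b₁+bᵢ) + H(x, b₁-bᵢ)). -/
theorem stmt_8 (b₁ bᵢ x : ℝ) :
    HasDerivAt (fun b => sid b bᵢ x + mid b bᵢ x)
      ((1 / 2) * (H x (b₁ + bᵢ) + H x (b₁ - bᵢ))) b₁ := by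
  have hpos : ∀ b c : ℝ, 0 < Real.cosh (x / 2) + Real.cosh ((b + c) / 2) := fun b c => by
    positivity
  have hepos : ∀ y z : ℝ, 0 < Real.exp y + Real.exp z := fun y z => by positivity
  have hfun : (fun b => sid b bᵢ x + mid b bᵢ x) = fun b =>
      (Real.log (Real.cosh (x / 2) + Real.cosh ((b + bᵢ) / 2)) -
        Real.log (Real.cosh (x / 2) + Real.cosh ((b - bᵢ) / 2))) +
      2 * (Real.log (Real.exp (b / 2) + Real.exp ((bᵢ + x) / 2)) -
        Real.log (Real.exp (-b / 2) + Real.exp ((bᵢ + x) / 2))) := by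
    funext b
    rw [sid, mid, Real.log_div (hpos b bᵢ).ne' (by positivity),
      Real.log_div (hepos _ _).ne' (hepos _ _).ne']
  rw [hfun]
  have h1 : HasDerivAt (fun b : ℝ => Real.cosh (x / 2) + Real.cosh ((b + bᵢ) / 2))
      (Real.sinh ((b₁ + bᵢ) / 2) * (1 / 2)) b₁ :=
    ((((hasDerivAt_id b₁).add_const bᵢ).div_const 2).cosh).const_add _
  have h2 : HasDerivAt (fun b : ℝ => Real.cosh (x / 2) + Real.cosh ((b - bᵢ) / 2))
      (Real.sinh ((b₁ - bᵢ) / 2) * (1 / 2)) b₁ :=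
    ((((hasDerivAt_id b₁).sub_const bᵢ).div_const 2).cosh).const_add _
  have h3 : HasDerivAt (fun b : ℝ => Real.exp (b / 2) + Real.exp ((bᵢ + x) / 2))
      (Real.exp (b₁ / 2) * (1 / 2)) b₁ :=
    (((hasDerivAt_id b₁).div_const 2).exp).add_const _
  have h4 : HasDerivAt (fun b : ℝ => Real.exp (-b / 2) + Real.exp ((bᵢ + x) / 2))
      (Real.exp (-b₁ / 2) * (-1 / 2)) b₁ := by
    have : HasDerivAt (fun b : ℝ => -b / 2) (-1 / 2) b₁ := by
      simpa using ((hasDerivAt_id b₁).neg.div_const 2)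
    exact (this.exp).add_const _
  have hD := ((h1.log (hpos b₁ bᵢ).ne').sub (h2.log (by positivity))).add
    (((h3.log (hepos _ _).ne').sub (h4.log (hepos _ _).ne')).const_mul 2)
  refine HasDerivAt.congr_deriv hD ?_
  symm
  simp only [H, Real.cosh_eq, Real.sinh_eq]
  rw [show (x + (b₁ + bᵢ)) / 2 = x / 2 + (b₁ / 2 + bᵢ / 2) by ring,
    show (x - (b₁ + bᵢ)) / 2 = x / 2 - (b₁ / 2 + bᵢ / 2) by ring,
    show (x + (b₁ - bᵢ)) / 2 = x / 2 + (b₁ / 2 - bᵢ / 2) by ring,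
    show (x - (b₁ - bᵢ)) / 2 = x / 2 - (b₁ / 2 - bᵢ / 2) by ring,
    show (b₁ + bᵢ) / 2 = b₁ / 2 + bᵢ / 2 by ring,
    show (b₁ - bᵢ) / 2 = b₁ / 2 - bᵢ / 2 by ring,
    show (bᵢ + x) / 2 = bᵢ / 2 + x / 2 by ring,
    show -b₁ / 2 = -(b₁ / 2) by ring]
  simp only [Real.exp_add, Real.exp_sub, Real.exp_neg]
  set X := Real.exp (x / 2) with hX
  set B := Real.exp (b₁ / 2) with hB
  set E := Real.exp (bᵢ / 2) with hE
  have hXp : 0 < X := Real.exp_pos _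
  have hBp : 0 < B := Real.exp_pos _
  have hEp : 0 < E := Real.exp_pos _
  have n1 : (0:ℝ) < 1 + X * (B * E) := by positivity
  have n2 : (0:ℝ) < 1 + X / (B * E) := by positivity
  have n3 : (0:ℝ) < 1 + X * (B / E) := by positivity
  have n4 : (0:ℝ) < 1 + X / (B / E) := by positivity
  have n5 : (0:ℝ) < (X + X⁻¹) / 2 + (B * E + (B * E)⁻¹) / 2 := by positivity
  have n6 : (0:ℝ) < (X + X⁻¹) / 2 + (B / E + (B / E)⁻¹) / 2 := by positivity
  have n7 : (0:ℝ) < B + E * X := by positivity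
  have n8 : (0:ℝ) < B⁻¹ + E * X := by positivity
  field_simp
  ring
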